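/- arXiv:1203.3417 — 4 statements merged into one kernel-verified Lean document; each statement's English description precedes it below -/
import Mathlib

section
/- Let μ and ν be probability measures on ℝ. For every s ∈ ℝ, one has |∫ e^{−isx} dμ(x) − ∫ e^{−isx} dν(x)| ≤ 2|s| · ℓ_{1,|s|}(μ, ν). -/
open MeasureTheory

/-- The `k`-Kantorovich distance between two probability measures on `ℝ`:
the supremum of `|∫ f dμ - ∫ f dν|` over bounded, twice continuously differentiable
`f : ℝ → ℝ` with `‖f'‖_∞ ≤ 1` and `‖f''‖_∞ ≤ k`. -/
noncomputable def kantorovich2 (k : ℝ) (μ ν : Measure ℝ) : ENNReal :=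
  ⨆ (f : ℝ → ℝ) (_ : ContDiff ℝ 2 f) (_ : ∃ C, ∀ x, |f x| ≤ C)
    (_ : ∀ x, |deriv f x| ≤ 1) (_ : ∀ x, |deriv (deriv f) x| ≤ k),
    ENNReal.ofReal |(∫ x, f x ∂μ) - ∫ x, f x ∂ν|

lemma kant_aux (k : ℝ) (μ ν : Measure ℝ) (f : ℝ → ℝ) (h1 : ContDiff ℝ 2 f)
    (h2 : ∃ C, ∀ x, |f x| ≤ C) (h3 : ∀ x, |deriv f x| ≤ 1)
    (h4 : ∀ x, |deriv (deriv f) x| ≤ k) :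
    ENNReal.ofReal |(∫ x, f x ∂μ) - ∫ x, f x ∂ν| ≤ kantorovich2 k μ ν :=
  le_iSup_of_le f (le_iSup_of_le h1 (le_iSup_of_le h2 (le_iSup_of_le h3
    (le_iSup_of_le h4 le_rfl))))

lemma exp_int (s : ℝ) (μ : Measure ℝ) [IsProbabilityMeasure μ] :
    Integrable (fun x : ℝ => Complex.exp (-Complex.I * s * x)) μ := by
  have hc : Continuous (fun x : ℝ => Complex.exp (-Complex.I * s * x)) := by
    continuity
  refine (integrable_const (1 : ℝ)).mono' hc.aestronglyMeasurable ?_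
  refine Filter.Eventually.of_forall fun x => ?_
  rw [Complex.norm_exp]
  simp [Complex.mul_re, Complex.mul_im]

lemma hasDerivAt_cos_smul (s x : ℝ) :
    HasDerivAt (fun x : ℝ => Real.cos (s * x)) (-Real.sin (s * x) * s) x :=
  (Real.hasDerivAt_cos (s * x)).comp x (by simpa using (hasDerivAt_id x).const_mul s)

lemma hasDerivAt_sin_smul (s x : ℝ) :
    HasDerivAt (fun x : ℝ => Real.sin (s * x)) (Real.cos (s * x) * s) x :=
  (Real.hasDerivAt_sin (s * x)).comp x (by simpa using (hasDerivAt_id x).const_mul s)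


/-- For probability measures `μ`, `ν` on `ℝ` and `s ∈ ℝ`, the characteristic functions
satisfy `|∫ e^{-isx} dμ - ∫ e^{-isx} dν| ≤ 2|s| ℓ_{1,|s|}(μ, ν)`. -/
theorem stmt7 (μ ν : Measure ℝ) [IsProbabilityMeasure μ] [IsProbabilityMeasure ν] (s : ℝ) :
    ENNReal.ofReal ‖
        ((∫ x : ℝ, Complex.exp (-Complex.I * s * x) ∂μ) -
          ∫ x : ℝ, Complex.exp (-Complex.I * s * x) ∂ν)‖ ≤
      ENNReal.ofReal (2 * |s|) * kantorovich2 |s| μ ν := by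
  by_cases hs : s = 0
  · subst hs
    simp
  -- test functions
  set f : ℝ → ℝ := fun x => Real.cos (s * x) / s with hf_def
  set g : ℝ → ℝ := fun x => -Real.sin (s * x) / s with hg_def
  have hf_deriv : deriv f = fun x => -Real.sin (s * x) := by
    funext x
    have := ((hasDerivAt_cos_smul s x).div_const s).deriv
    rwa [mul_div_assoc, div_self hs, mul_one] at this
  have hg_deriv : deriv g = fun x => -Real.cos (s * x) := by
    funext x
    have h : HasDerivAt g (-(Real.cos (s * x) * s) / s) x :=
      ((hasDerivAt_sin_smul s x).neg).div_const s
    have := h.deriv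
    rwa [neg_div, mul_div_assoc, div_self hs, mul_one] at this
  have hf_deriv2 : deriv (deriv f) = fun x => -Real.cos (s * x) * s := by
    rw [hf_deriv]; funext x
    simpa [neg_mul] using ((hasDerivAt_sin_smul s x).neg).deriv
  have hg_deriv2 : deriv (deriv g) = fun x => Real.sin (s * x) * s := by
    rw [hg_deriv]; funext x
    have := ((hasDerivAt_cos_smul s x).neg).deriv
    simpa [neg_mul] using this
  have hf_cd : ContDiff ℝ 2 f :=
    (Real.contDiff_cos.comp (contDiff_const.mul contDiff_id)).div_const s
  have hg_cd : ContDiff ℝ 2 g :=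
    ((Real.contDiff_sin.comp (contDiff_const.mul contDiff_id)).neg).div_const s
  have hf_bd : ∃ C, ∀ x, |f x| ≤ C := by
    refine ⟨1 / |s|, fun x => ?_⟩
    rw [hf_def, abs_div]
    gcongr
    exact Real.abs_cos_le_one _
  have hg_bd : ∃ C, ∀ x, |g x| ≤ C := by
    refine ⟨1 / |s|, fun x => ?_⟩
    rw [hg_def, abs_div, abs_neg]
    gcongr
    exact Real.abs_sin_le_one _
  have hf_d1 : ∀ x, |deriv f x| ≤ 1 := by
    rw [hf_deriv]; intro x; rw [abs_neg]; exact Real.abs_sin_le_one _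
  have hg_d1 : ∀ x, |deriv g x| ≤ 1 := by
    rw [hg_deriv]; intro x; rw [abs_neg]; exact Real.abs_cos_le_one _
  have hf_d2 : ∀ x, |deriv (deriv f) x| ≤ |s| := by
    rw [hf_deriv2]; intro x
    rw [abs_mul, abs_neg]
    calc |Real.cos (s*x)| * |s| ≤ 1 * |s| := by
          gcongr; exact Real.abs_cos_le_one _
      _ = |s| := one_mul _
  have hg_d2 : ∀ x, |deriv (deriv g) x| ≤ |s| := by
    rw [hg_deriv2]; intro x
    rw [abs_mul]
    calc |Real.sin (s*x)| * |s| ≤ 1 * |s| := by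
          gcongr; exact Real.abs_sin_le_one _
      _ = |s| := one_mul _
  -- real and imaginary parts of the integrals
  have hre : ∀ (m : Measure ℝ) [IsProbabilityMeasure m],
      (∫ x : ℝ, Complex.exp (-Complex.I * s * x) ∂m).re = s * ∫ x, f x ∂m := by
    intro m _
    have h1 : (∫ x, f x ∂m) = (∫ x, Real.cos (s * x) ∂m) / s := integral_div s _
    rw [h1, mul_div_cancel₀ _ hs]
    refine Eq.trans (integral_re (exp_int s m)).symm ?_
    refine integral_congr_ae (Filter.Eventually.of_forall fun x => ?_)
    simp [Complex.exp_re, Complex.mul_re, Complex.mul_im, Real.cos_neg]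
  have him : ∀ (m : Measure ℝ) [IsProbabilityMeasure m],
      (∫ x : ℝ, Complex.exp (-Complex.I * s * x) ∂m).im = s * ∫ x, g x ∂m := by
    intro m _
    have h1 : (∫ x, g x ∂m) = (∫ x, -Real.sin (s * x) ∂m) / s := integral_div s _
    rw [h1, mul_div_cancel₀ _ hs]
    refine Eq.trans (integral_im (exp_int s m)).symm ?_
    refine integral_congr_ae (Filter.Eventually.of_forall fun x => ?_)
    simp [Complex.exp_im, Complex.mul_re, Complex.mul_im, Real.sin_neg]
  set z := (∫ x : ℝ, Complex.exp (-Complex.I * s * x) ∂μ) -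
      ∫ x : ℝ, Complex.exp (-Complex.I * s * x) ∂ν with hz
  have hZre : z.re = s * ((∫ x, f x ∂μ) - ∫ x, f x ∂ν) := by
    rw [hz, Complex.sub_re, hre μ, hre ν, mul_sub]
  have hZim : z.im = s * ((∫ x, g x ∂μ) - ∫ x, g x ∂ν) := by
    rw [hz, Complex.sub_im, him μ, him ν, mul_sub]
  set K := kantorovich2 |s| μ ν with hK
  calc ENNReal.ofReal ‖z‖
      ≤ ENNReal.ofReal (|z.re| + |z.im|) :=
        ENNReal.ofReal_le_ofReal (Complex.norm_le_abs_re_add_abs_im z)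
    _ = ENNReal.ofReal |z.re| + ENNReal.ofReal |z.im| :=
        ENNReal.ofReal_add (abs_nonneg _) (abs_nonneg _)
    _ ≤ ENNReal.ofReal |s| * K + ENNReal.ofReal |s| * K := by
        refine add_le_add ?_ ?_
        · rw [hZre, abs_mul, ENNReal.ofReal_mul (abs_nonneg s)]
          exact mul_le_mul_right (kant_aux |s| μ ν f hf_cd hf_bd hf_d1 hf_d2) _
        · rw [hZim, abs_mul, ENNReal.ofReal_mul (abs_nonneg s)]
          exact mul_le_mul_right (kant_aux |s| μ ν g hg_cd hg_bd hg_d1 hg_d2) _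
    _ = ENNReal.ofReal (2 * |s|) * K := by
        rw [ENNReal.ofReal_mul (by norm_num : (0:ℝ) ≤ 2), ← two_mul, mul_assoc]
        norm_num
end

section
/- Let γ > 1 and 0 < c ≤ 2. There exists a constant C such that for every r > 0, ∫_0^∞ e^{−t} t^{−γ} e^{−c r²/t} dt ≤ C r^{2−2γ} e^{−c r/2}. -/
open MeasureTheory Real

lemma aux_integrable (γ a : ℝ) (hγ : 1 < γ) (ha : 0 < a) :
    IntegrableOn (fun y : ℝ => y ^ (γ - 2) * Real.exp (-a * y)) (Set.Ioi 0) := by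
  have h := integrableOn_rpow_mul_exp_neg_mul_rpow (s := γ - 2) (p := 1) (b := a)
    (by linarith) one_pos ha
  refine h.congr_fun (fun x hx => ?_) measurableSet_Ioi
  simp only [Real.rpow_one]

lemma aux_congr (γ a : ℝ) (hγ : 1 < γ) (ha : 0 < a) :
    ∀ x ∈ Set.Ioi (0:ℝ),
      (|(-1 : ℝ)| * x ^ ((-1:ℝ) - 1)) •
        ((fun y : ℝ => y ^ (γ - 2) * Real.exp (-a * y)) (x ^ (-1:ℝ)))
        = x ^ (-γ) * Real.exp (-(a / x)) := by
  intro x hx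
  have hx0 : (0:ℝ) < x := hx
  simp only [smul_eq_mul, abs_neg, abs_one, one_mul]
  rw [Real.rpow_neg_one, Real.inv_rpow hx0.le, ← Real.rpow_neg hx0.le,
    ← mul_assoc, ← Real.rpow_add hx0]
  congr 1
  · congr 1; ring
  · congr 1; field_simp

lemma aux_eval (γ a : ℝ) (hγ : 1 < γ) (ha : 0 < a) :
    IntegrableOn (fun t : ℝ => t ^ (-γ) * Real.exp (-(a / t))) (Set.Ioi 0) ∧
    ∫ t in Set.Ioi (0:ℝ), t ^ (-γ) * Real.exp (-(a / t))
      = a ^ (1 - γ) * Real.Gamma (γ - 1) := by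
  have hf := aux_integrable γ a hγ ha
  have hcongr := aux_congr γ a hγ ha
  constructor
  · have h := (integrableOn_Ioi_comp_rpow_iff
      (fun y : ℝ => y ^ (γ - 2) * Real.exp (-a * y)) (p := -1) (by norm_num)).mpr hf
    exact h.congr_fun hcongr measurableSet_Ioi
  · have h := integral_comp_rpow_Ioi
      (fun y : ℝ => y ^ (γ - 2) * Real.exp (-a * y)) (p := -1) (by norm_num)
    rw [setIntegral_congr_fun measurableSet_Ioi hcongr] at h
    rw [h]
    have h2 : ∫ y in Set.Ioi (0:ℝ), y ^ ((γ - 1) - 1) * Real.exp (-(a * y))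
        = (1 / a) ^ (γ - 1) * Real.Gamma (γ - 1) :=
      Real.integral_rpow_mul_exp_neg_mul_Ioi (by linarith) ha
    rw [show ∫ y in Set.Ioi (0:ℝ), y ^ (γ - 2) * Real.exp (-a * y)
        = ∫ y in Set.Ioi (0:ℝ), y ^ ((γ - 1) - 1) * Real.exp (-(a * y)) by
      refine setIntegral_congr_fun measurableSet_Ioi (fun y hy => ?_)
      rw [neg_mul, show γ - 1 - 1 = γ - 2 by ring], h2]
    congr 1
    rw [one_div, ← Real.rpow_neg_one a, ← Real.rpow_mul ha.le]
    congr 1; ring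

/-- For `γ > 1` and `0 < c ≤ 2`, there is a constant `C` such that for every `r > 0`,
`∫_0^∞ e^{-t} t^{-γ} e^{-c r²/t} dt ≤ C r^{2-2γ} e^{-c r/2}`. -/
theorem stmt10 (γ c : ℝ) (hγ : 1 < γ) (hc : 0 < c) (hc2 : c ≤ 2) :
    ∃ C : ℝ, ∀ r : ℝ, 0 < r →
      ∫ t in Set.Ioi (0 : ℝ), Real.exp (-t) * t ^ (-γ) * Real.exp (-c * r ^ 2 / t) ≤
        C * r ^ (2 - 2 * γ) * Real.exp (-c * r / 2) := by
  refine ⟨(c / 2) ^ (1 - γ) * Real.Gamma (γ - 1), fun r hr => ?_⟩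
  set a : ℝ := c * r ^ 2 / 2 with ha_def
  have ha : 0 < a := by positivity
  obtain ⟨hInt, hEval⟩ := aux_eval γ a hγ ha
  -- pointwise bound
  have hbound : ∀ t ∈ Set.Ioi (0:ℝ),
      Real.exp (-t) * t ^ (-γ) * Real.exp (-c * r ^ 2 / t)
        ≤ Real.exp (-(c * r / 2)) * (t ^ (-γ) * Real.exp (-(a / t))) := by
    intro t ht
    have ht0 : (0:ℝ) < t := ht
    have htne : t ≠ 0 := ht0.ne'
    have key : -t + (-c * r ^ 2 / t) ≤ -(c * r / 2) + (-(a / t)) := by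
      rw [← sub_nonneg, show -(c * r / 2) + (-(a / t)) - (-t + (-c * r ^ 2 / t))
          = (2*t^2 - c*r*t + c*r^2)/(2*t) by rw [ha_def]; field_simp; ring]
      apply div_nonneg _ (by linarith)
      nlinarith [sq_nonneg (4*t - c*r), mul_nonneg (mul_nonneg hc.le
        (by linarith : (0:ℝ) ≤ 8 - c)) (sq_nonneg r)]
    calc Real.exp (-t) * t ^ (-γ) * Real.exp (-c * r ^ 2 / t)
        = t ^ (-γ) * Real.exp (-t + (-c * r ^ 2 / t)) := by
          rw [Real.exp_add]; ring
      _ ≤ t ^ (-γ) * Real.exp (-(c * r / 2) + (-(a / t))) := by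
          apply mul_le_mul_of_nonneg_left (Real.exp_le_exp.mpr key)
          positivity
      _ = Real.exp (-(c * r / 2)) * (t ^ (-γ) * Real.exp (-(a / t))) := by
          rw [Real.exp_add]; ring
  have hmono : (∫ t in Set.Ioi (0 : ℝ),
        Real.exp (-t) * t ^ (-γ) * Real.exp (-c * r ^ 2 / t))
      ≤ ∫ t in Set.Ioi (0:ℝ),
        Real.exp (-(c * r / 2)) * (t ^ (-γ) * Real.exp (-(a / t))) := by
    refine integral_mono_of_nonneg ?_ (hInt.const_mul _) ?_
    · filter_upwards [self_mem_ae_restrict (measurableSet_Ioi : MeasurableSet (Set.Ioi (0:ℝ)))]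
        with t ht
      have ht0 : (0:ℝ) < t := ht
      positivity
    · filter_upwards [self_mem_ae_restrict (measurableSet_Ioi : MeasurableSet (Set.Ioi (0:ℝ)))]
        with t ht
      exact hbound t ht
  refine hmono.trans ?_
  rw [integral_const_mul, hEval]
  have hpow : a ^ (1 - γ) = (c / 2) ^ (1 - γ) * r ^ (2 - 2 * γ) := by
    have h : a = (c / 2) * r ^ ((2:ℕ):ℝ) := by
      rw [Real.rpow_natCast]; push_cast; rw [ha_def]; ring
    rw [h, Real.mul_rpow (by positivity) (by positivity), ← Real.rpow_mul hr.le,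
      show ((2:ℕ):ℝ) * (1 - γ) = 2 - 2 * γ by push_cast; ring]
  rw [hpow, show -(c * r / 2) = -c * r / 2 by ring]
  apply le_of_eq
  ring
end

section
/- Let γ > 1 and 0 < c ≤ 2. There exists a constant C such that for every r ≥ 0, ∫_0^∞ s^{−γ} e^{−s r²} e^{−c/s} ds ≤ C e^{−c r/2}. -/
open MeasureTheory Real

lemma stmt11_meas (γ c : ℝ) (S : Set ℝ) (hS : MeasurableSet S) (hS0 : ∀ x ∈ S, x ≠ 0) :
    AEStronglyMeasurable (fun s : ℝ => s ^ (-γ) * Real.exp (-c / (2 * s)))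
      (volume.restrict S) := by
  apply ContinuousOn.aestronglyMeasurable _ hS
  apply ContinuousOn.mul
  · exact ContinuousOn.rpow_const continuousOn_id fun x hx => Or.inl (hS0 x hx)
  · apply Real.continuous_exp.comp_continuousOn
    exact ContinuousOn.div continuousOn_const (continuous_const.mul continuous_id).continuousOn
      fun x hx => mul_ne_zero two_ne_zero (hS0 x hx)

lemma stmt11_aux (γ c : ℝ) (hγ : 1 < γ) (hc : 0 < c) :
    IntegrableOn (fun s : ℝ => s ^ (-γ) * Real.exp (-c / (2 * s))) (Set.Ioi 0) := by
  have h01 : Set.Ioc (0:ℝ) 1 ∪ Set.Ioi 1 = Set.Ioi 0 := Set.Ioc_union_Ioi_eq_Ioi zero_le_one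
  rw [← h01]
  apply IntegrableOn.union
  · -- on (0,1]
    set n : ℕ := ⌈γ⌉₊ with hn
    have hnγ : γ ≤ n := Nat.le_ceil γ
    have hbase : IntegrableOn
        (fun s : ℝ => (Nat.factorial n : ℝ) * (2 / c) ^ n * s ^ ((n : ℝ) - γ))
        (Set.Ioc (0:ℝ) 1) := by
      apply Integrable.const_mul
      exact (intervalIntegrable_iff_integrableOn_Ioc_of_le zero_le_one).1
        (intervalIntegral.intervalIntegrable_rpow' (by linarith))
    apply hbase.mono'
      (stmt11_meas γ c _ measurableSet_Ioc fun x hx => ne_of_gt hx.1)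
    rw [ae_restrict_iff' measurableSet_Ioc]
    filter_upwards with s hs
    obtain ⟨hs0, hs1⟩ := hs
    have hx : 0 < c / (2 * s) := by positivity
    have hexp : Real.exp (-c / (2 * s)) ≤ (Nat.factorial n : ℝ) * (2 / c) ^ n * s ^ n := by
      have h1 : (c / (2 * s)) ^ n / (Nat.factorial n : ℝ) ≤ Real.exp (c / (2 * s)) :=
        Real.pow_div_factorial_le_exp _ hx.le n
      have h2 : Real.exp (-c / (2 * s)) = (Real.exp (c / (2 * s)))⁻¹ := by
        rw [← Real.exp_neg]; ring_nf
      rw [h2]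
      have h3 : (Real.exp (c / (2 * s)))⁻¹ ≤ ((c / (2 * s)) ^ n / (Nat.factorial n : ℝ))⁻¹ :=
        inv_anti₀ (by positivity) h1
      refine h3.trans (le_of_eq ?_)
      rw [div_pow]
      field_simp
      have hc' : c ^ n * c⁻¹ ^ n = 1 := by rw [← mul_pow, mul_inv_cancel₀ hc.ne', one_pow]
      linear_combination (-(s ^ n * 2 ^ n)) * hc'
    have hrw : s ^ ((n:ℝ) - γ) = s ^ (-γ) * s ^ n := by
      rw [← Real.rpow_natCast s n, ← Real.rpow_add hs0]
      ring_nf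
    have h0 : (0:ℝ) ≤ s ^ (-γ) := Real.rpow_nonneg hs0.le _
    have hmul := mul_le_mul_of_nonneg_left hexp h0
    calc ‖s ^ (-γ) * Real.exp (-c / (2 * s))‖
        = s ^ (-γ) * Real.exp (-c / (2 * s)) := by
          rw [Real.norm_eq_abs, abs_of_nonneg (by positivity)]
      _ ≤ s ^ (-γ) * ((Nat.factorial n : ℝ) * (2 / c) ^ n * s ^ n) := hmul
      _ = (Nat.factorial n : ℝ) * (2 / c) ^ n * s ^ ((n:ℝ) - γ) := by rw [hrw]; ring
  · -- on (1,∞)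
    have hbase : IntegrableOn (fun s : ℝ => s ^ (-γ)) (Set.Ioi (1:ℝ)) :=
      (integrableOn_Ioi_rpow_iff one_pos).2 (by linarith)
    apply hbase.mono'
      (stmt11_meas γ c _ measurableSet_Ioi fun x hx => ne_of_gt (lt_trans one_pos hx))
    rw [ae_restrict_iff' measurableSet_Ioi]
    filter_upwards with s hs
    have hs0 : (0:ℝ) < s := lt_trans one_pos hs
    have hexp : Real.exp (-c / (2 * s)) ≤ 1 := by
      apply Real.exp_le_one_iff.2
      have h : 0 < c / (2 * s) := by positivity
      rw [neg_div]
      linarith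
    calc ‖s ^ (-γ) * Real.exp (-c / (2 * s))‖
        = s ^ (-γ) * Real.exp (-c / (2 * s)) := by
          rw [Real.norm_eq_abs, abs_of_nonneg (by positivity)]
      _ ≤ s ^ (-γ) * 1 := mul_le_mul_of_nonneg_left hexp (Real.rpow_nonneg hs0.le _)
      _ = s ^ (-γ) := mul_one _

/-- For `γ > 1` and `0 < c ≤ 2`, there is a constant `C` such that for every `r ≥ 0`,
`∫_0^∞ s^{-γ} e^{-s r²} e^{-c/s} ds ≤ C e^{-c r/2}`. -/
theorem stmt11 (γ c : ℝ) (hγ : 1 < γ) (hc : 0 < c) (hc2 : c ≤ 2) :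
    ∃ C : ℝ, ∀ r : ℝ, 0 ≤ r →
      ∫ s in Set.Ioi (0 : ℝ), s ^ (-γ) * Real.exp (-s * r ^ 2) * Real.exp (-c / s) ≤
        C * Real.exp (-c * r / 2) := by
  set g : ℝ → ℝ := fun s => s ^ (-γ) * Real.exp (-c / (2 * s)) with hgdef
  have hg : IntegrableOn g (Set.Ioi 0) := stmt11_aux γ c hγ hc
  refine ⟨∫ s in Set.Ioi (0:ℝ), g s, fun r hr => ?_⟩
  have key : ∀ s ∈ Set.Ioi (0:ℝ),
      s ^ (-γ) * Real.exp (-s * r ^ 2) * Real.exp (-c / s) ≤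
        Real.exp (-c * r / 2) * g s := by
    intro s hs
    have hs0 : (0:ℝ) < s := hs
    have hineq : -s * r ^ 2 + -c / s ≤ -c * r / 2 + -c / (2 * s) := by
      have h2 : 0 ≤ (-c * r / 2 + -c / (2 * s)) - (-s * r ^ 2 + -c / s) := by
        have e : (-c * r / 2 + -c / (2 * s)) - (-s * r ^ 2 + -c / s)
            = (2 * s ^ 2 * r ^ 2 + c - c * r * s) / (2 * s) := by
          field_simp
          ring
        rw [e]
        apply div_nonneg _ (by positivity)
        nlinarith [sq_nonneg (s * r - c / 2), sq_nonneg (s * r),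
          mul_nonneg (mul_nonneg hc.le hr) hs0.le]
      linarith
    have hexp : Real.exp (-s * r ^ 2) * Real.exp (-c / s) ≤
        Real.exp (-c * r / 2) * Real.exp (-c / (2 * s)) := by
      rw [← Real.exp_add, ← Real.exp_add]
      exact Real.exp_le_exp.2 hineq
    calc s ^ (-γ) * Real.exp (-s * r ^ 2) * Real.exp (-c / s)
        = s ^ (-γ) * (Real.exp (-s * r ^ 2) * Real.exp (-c / s)) := by ring
      _ ≤ s ^ (-γ) * (Real.exp (-c * r / 2) * Real.exp (-c / (2 * s))) :=
          mul_le_mul_of_nonneg_left hexp (Real.rpow_nonneg hs0.le _)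
      _ = Real.exp (-c * r / 2) * g s := by rw [hgdef]; ring
  have hfm : AEStronglyMeasurable
      (fun s : ℝ => s ^ (-γ) * Real.exp (-s * r ^ 2) * Real.exp (-c / s))
      (volume.restrict (Set.Ioi (0:ℝ))) := by
    apply ContinuousOn.aestronglyMeasurable _ measurableSet_Ioi
    apply ContinuousOn.mul
    · apply ContinuousOn.mul
      · exact ContinuousOn.rpow_const continuousOn_id fun x hx => Or.inl (ne_of_gt hx)
      · exact (Real.continuous_exp.comp (by continuity)).continuousOn
    · apply Real.continuous_exp.comp_continuousOn
      exact ContinuousOn.div continuousOn_const continuous_id.continuousOn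
        fun x hx => ne_of_gt hx
  have hf : IntegrableOn (fun s : ℝ =>
      s ^ (-γ) * Real.exp (-s * r ^ 2) * Real.exp (-c / s)) (Set.Ioi 0) := by
    apply (hg.const_mul (Real.exp (-c * r / 2))).mono' hfm
    rw [ae_restrict_iff' measurableSet_Ioi]
    filter_upwards with s hs
    have hs0 : (0:ℝ) < s := hs
    rw [Real.norm_eq_abs, abs_of_nonneg (by positivity)]
    exact key s hs
  calc ∫ s in Set.Ioi (0:ℝ), s ^ (-γ) * Real.exp (-s * r ^ 2) * Real.exp (-c / s)
      ≤ ∫ s in Set.Ioi (0:ℝ), Real.exp (-c * r / 2) * g s :=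
        setIntegral_mono_on hf (hg.const_mul _) measurableSet_Ioi key
    _ = Real.exp (-c * r / 2) * ∫ s in Set.Ioi (0:ℝ), g s := integral_const_mul _ _
    _ = (∫ s in Set.Ioi (0:ℝ), g s) * Real.exp (-c * r / 2) := mul_comm _ _
end

section
/- Let 0 < γ < 1 and c > 0. There exist constants C and c' > 0 such that for every r ≥ 0, ∫_0^∞ e^{−t} t^{−γ} e^{−c r²/t} dt ≤ C (r^{2−2γ} + 1) e^{−c' r}. -/
open MeasureTheory Real

/-- For `0 < γ < 1` and `c > 0`, there are constants `C` and `c' > 0` such that for every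
`r ≥ 0`, `∫_0^∞ e^{-t} t^{-γ} e^{-c r²/t} dt ≤ C (r^{2-2γ} + 1) e^{-c' r}`. -/
theorem stmt12 (γ c : ℝ) (hγ0 : 0 < γ) (hγ1 : γ < 1) (hc : 0 < c) :
    ∃ C c' : ℝ, 0 < c' ∧ ∀ r : ℝ, 0 ≤ r →
      ∫ t in Set.Ioi (0 : ℝ), Real.exp (-t) * t ^ (-γ) * Real.exp (-c * r ^ 2 / t) ≤
        C * (r ^ (2 - 2 * γ) + 1) * Real.exp (-c' * r) := by
  set C : ℝ := ∫ t in Set.Ioi (0 : ℝ), t ^ (-γ) * Real.exp (-(1/2) * t) with hC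
  have hint : IntegrableOn (fun t : ℝ => t ^ (-γ) * Real.exp (-(1/2) * t)) (Set.Ioi 0) := by
    have := integrableOn_rpow_mul_exp_neg_mul_rpow (p := 1) (s := -γ) (b := 1/2)
      (by linarith) one_pos (by norm_num)
    simpa [Real.rpow_one] using this
  have hCnn : 0 ≤ C := by
    apply setIntegral_nonneg measurableSet_Ioi
    intro t ht
    have ht0 : 0 < t := ht
    positivity
  refine ⟨C, Real.sqrt (2 * c), Real.sqrt_pos.2 (by linarith), fun r hr => ?_⟩
  set s := Real.sqrt (2 * c) with hs
  have hs2 : s ^ 2 = 2 * c := Real.sq_sqrt (by linarith)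
  have hsnn : 0 ≤ s := Real.sqrt_nonneg _
  have hAM : ∀ t : ℝ, 0 < t → s * r ≤ t / 2 + c * r ^ 2 / t := by
    intro t ht0
    have h1 : s * r * t ≤ t ^ 2 / 2 + c * r ^ 2 := by nlinarith [sq_nonneg (t - s * r)]
    have h2 : s * r ≤ (t ^ 2 / 2 + c * r ^ 2) / t := by
      rw [le_div_iff₀ ht0]; linarith
    have h3 : (t ^ 2 / 2 + c * r ^ 2) / t = t / 2 + c * r ^ 2 / t := by
      field_simp
    linarith [h3 ▸ h2]
  have hptwise : ∀ t : ℝ, 0 < t →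
      Real.exp (-t) * t ^ (-γ) * Real.exp (-c * r ^ 2 / t) ≤
      Real.exp (-s * r) * (t ^ (-γ) * Real.exp (-(1/2) * t)) := by
    intro t ht0
    have hAM' := hAM t ht0
    have hneg : -c * r ^ 2 / t = -(c * r ^ 2 / t) := by ring
    calc Real.exp (-t) * t ^ (-γ) * Real.exp (-c * r ^ 2 / t)
        = t ^ (-γ) * Real.exp (-t + -c * r ^ 2 / t) := by rw [Real.exp_add]; ring
      _ ≤ t ^ (-γ) * Real.exp (-s * r + -(1/2) * t) := by
          apply mul_le_mul_of_nonneg_left _ (by positivity)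
          apply Real.exp_le_exp.2
          rw [hneg]
          linarith
      _ = Real.exp (-s * r) * (t ^ (-γ) * Real.exp (-(1/2) * t)) := by
          rw [Real.exp_add]; ring
  have key : ∫ t in Set.Ioi (0 : ℝ),
      Real.exp (-t) * t ^ (-γ) * Real.exp (-c * r ^ 2 / t) ≤
      ∫ t in Set.Ioi (0 : ℝ),
      Real.exp (-s * r) * (t ^ (-γ) * Real.exp (-(1/2) * t)) := by
    apply setIntegral_mono_on
    · apply Integrable.mono (hint.const_mul (Real.exp (-s * r)))
      · apply Measurable.aestronglyMeasurable
        fun_prop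
      · filter_upwards [self_mem_ae_restrict measurableSet_Ioi] with t ht
        have ht0 : 0 < t := ht
        have h1 : 0 ≤ Real.exp (-t) * t ^ (-γ) * Real.exp (-c * r ^ 2 / t) := by positivity
        have h2 : 0 ≤ Real.exp (-s * r) * (t ^ (-γ) * Real.exp (-(1/2) * t)) := by positivity
        rw [Real.norm_eq_abs, Real.norm_eq_abs, abs_of_nonneg h1, abs_of_nonneg h2]
        exact hptwise t ht0
    · exact hint.const_mul _
    · exact measurableSet_Ioi
    · intro t ht
      exact hptwise t ht
  rw [integral_const_mul] at key
  calc ∫ t in Set.Ioi (0:ℝ), Real.exp (-t) * t ^ (-γ) * Real.exp (-c * r ^ 2 / t)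
      ≤ Real.exp (-s * r) * C := key
    _ = C * 1 * Real.exp (-s * r) := by ring
    _ ≤ C * (r ^ (2 - 2*γ) + 1) * Real.exp (-s * r) := by
        apply mul_le_mul_of_nonneg_right _ (Real.exp_nonneg _)
        apply mul_le_mul_of_nonneg_left _ hCnn
        have : 0 ≤ r ^ (2 - 2*γ) := Real.rpow_nonneg hr _
        linarith
end
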